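/- For 1 ≤ p < 2 and any tensor product f = f₁⊗φ with f₁ ∈ M^p(ℝ) nonzero, the orbit {π(0,0,0,u,0)f : u ∈ ℝ} of the G_{5,3}-representation is unbounded in M^p(ℝ²): ‖π(0,0,0,u,0)(f₁⊗φ)‖_{M^p(ℝ²)} = c_p(4+u²)^{1/(2p)-1/4}‖f₁‖_{M^p}, which tends to infinity as |u| → ∞. -/

import Mathlib

open MeasureTheory Filter

/-- The Gaussian `φ(t) = e^{-π t²}`. -/
noncomputable def gauss1 (t : ℝ) : ℂ := Complex.exp ((-(Real.pi * t ^ 2) : ℝ) : ℂ)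

/-- The representation `π = π₁` of `G_{5,3}` on `L²(ℝ²)`. -/
noncomputable def g53rep (x : ℝ × ℝ × ℝ × ℝ × ℝ) (g : ℝ × ℝ → ℂ) :
    ℝ × ℝ → ℂ := fun p =>
  Complex.exp ((2 * Real.pi *
      (x.1 - x.2.2.1 * x.2.2.2.1 + x.2.2.2.1 * p.1 - x.2.1 * p.2
        + (1 / 2) * x.2.2.2.1 * p.2 ^ 2) : ℝ) * Complex.I) *
    g (p.1 - x.2.2.1, p.2 - x.2.2.2.2)

/-- The short-time Fourier transform on `ℝ` with Gaussian window. -/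
noncomputable def stftGauss (f : ℝ → ℂ) (x ξ : ℝ) : ℂ :=
  ∫ t : ℝ, f t * (starRingEnd ℂ) (gauss1 (t - x)) *
    Complex.exp (-(2 * Real.pi * t * ξ : ℝ) * Complex.I)

/-- The short-time Fourier transform on `ℝ²` with window `φ⊗φ`. -/
noncomputable def stftGauss2 (F : ℝ × ℝ → ℂ) (x₁ x₂ ξ₁ ξ₂ : ℝ) : ℂ :=
  ∫ q : ℝ × ℝ, F q * (starRingEnd ℂ) (gauss1 (q.1 - x₁) * gauss1 (q.2 - x₂)) *
    Complex.exp (-(2 * Real.pi * (q.1 * ξ₁ + q.2 * ξ₂) : ℝ) * Complex.I)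

noncomputable def bC (u : ℝ) : ℂ := Real.pi * (u * Complex.I - 2)
noncomputable def cC (x ξ : ℝ) : ℂ := 2 * Real.pi * x - 2 * Real.pi * ξ * Complex.I
noncomputable def dC (x : ℝ) : ℂ := -(Real.pi * x ^ 2)
noncomputable def Efun (u x ξ : ℝ) : ℝ :=
  -(Real.pi * x ^ 2) / 2 - 2 * Real.pi * (ξ - u * x / 2) ^ 2 / (4 + u ^ 2)
noncomputable def Gfun (u x ξ : ℝ) : ℝ :=
  Real.pi * (u * (x ^ 2 - ξ ^ 2) - 4 * x * ξ) / (4 + u ^ 2)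

private lemma exp5 (z a b c d e : ℂ) :
    Complex.exp a * (z * Complex.exp b) * (Complex.exp c * Complex.exp d) * Complex.exp e
      = z * Complex.exp (a + b + c + d + e) := by
  simp only [Complex.exp_add]; ring

private lemma exp3 (z a b c : ℂ) :
    z * Complex.exp a * Complex.exp b * Complex.exp c = z * Complex.exp (a + b + c) := by
  simp only [Complex.exp_add]; ring

lemma fact1 (f₁ : ℝ → ℂ) (u x₁ x₂ ξ₁ ξ₂ : ℝ) :
    stftGauss2 (g53rep (0, 0, 0, u, 0) (fun q => f₁ q.1 * gauss1 q.2)) x₁ x₂ ξ₁ ξ₂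
      = stftGauss f₁ x₁ (ξ₁ - u) *
        ∫ t : ℝ, Complex.exp (bC u * (t : ℂ) ^ 2 + cC x₂ ξ₂ * t + dC x₂) := by
  set h1 : ℝ → ℂ := fun t => f₁ t * (starRingEnd ℂ) (gauss1 (t - x₁)) *
    Complex.exp (-(2 * Real.pi * t * (ξ₁ - u) : ℝ) * Complex.I) with hh1
  set h2 : ℝ → ℂ := fun t => Complex.exp (bC u * (t : ℂ) ^ 2 + cC x₂ ξ₂ * t + dC x₂) with hh2
  have hpt : ∀ q : ℝ × ℝ,
      g53rep (0, 0, 0, u, 0) (fun q => f₁ q.1 * gauss1 q.2) q *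
        (starRingEnd ℂ) (gauss1 (q.1 - x₁) * gauss1 (q.2 - x₂)) *
        Complex.exp (-(2 * Real.pi * (q.1 * ξ₁ + q.2 * ξ₂) : ℝ) * Complex.I)
      = h1 q.1 * h2 q.2 := by
    intro q
    simp only [hh1, hh2, g53rep, gauss1, map_mul, ← Complex.exp_conj, Complex.conj_ofReal,
      sub_zero]
    rw [exp5, exp3]
    congr 1
    congr 1
    unfold bC cC dC
    push_cast
    ring
  unfold stftGauss2
  rw [show (fun q : ℝ × ℝ =>
      g53rep (0, 0, 0, u, 0) (fun q => f₁ q.1 * gauss1 q.2) q *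
        (starRingEnd ℂ) (gauss1 (q.1 - x₁) * gauss1 (q.2 - x₂)) *
        Complex.exp (-(2 * Real.pi * (q.1 * ξ₁ + q.2 * ξ₂) : ℝ) * Complex.I))
      = fun q : ℝ × ℝ => h1 q.1 * h2 q.2 from funext hpt]
  rw [MeasureTheory.Measure.volume_eq_prod ℝ ℝ, integral_prod_mul h1 h2]
  rfl

lemma hbre (u : ℝ) : (bC u).re < 0 := by
  simp [bC, Complex.mul_re, Complex.sub_re, Complex.mul_im]
  positivity

lemma keyc (u x ξ : ℝ) :
    dC x - cC x ξ ^ 2 / (4 * bC u) = ↑(Efun u x ξ) + ↑(Gfun u x ξ) * Complex.I := by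
  have hsC : ((4:ℂ) + (u:ℂ) ^ 2) ≠ 0 := by
    intro h; have := congrArg Complex.re h
    simp [Complex.add_re, ← Complex.ofReal_pow] at this
    nlinarith [sq_nonneg u]
  have hb : bC u ≠ 0 := by
    intro h; have h2 := hbre u; rw [h] at h2; simp at h2
  have h4b : (4 : ℂ) * bC u ≠ 0 := by simp [hb]
  rw [sub_eq_iff_eq_add, ← sub_eq_iff_eq_add', eq_div_iff h4b]
  unfold dC cC bC Efun Gfun
  push_cast
  field_simp
  ring_nf
  simp only [Complex.I_sq]
  ring

lemma normB (u x ξ : ℝ) :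
    ‖∫ t : ℝ, Complex.exp (bC u * (t : ℂ) ^ 2 + cC x ξ * t + dC x)‖
      = (4 + u ^ 2) ^ (-(1/4) : ℝ) * Real.exp (Efun u x ξ) := by
  rw [integral_cexp_quadratic (hbre u), norm_mul]
  have hb : bC u ≠ 0 := by
    intro h; have h2 := hbre u; rw [h] at h2; simp at h2
  have hs0 : (0:ℝ) ≤ 4 + u ^ 2 := by positivity
  have h1 : ‖(↑Real.pi / -bC u) ^ (1 / 2 : ℂ)‖ = (4 + u ^ 2) ^ (-(1/4) : ℝ) := by
    have hw : ((2:ℂ) - u * Complex.I) ≠ 0 := by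
      intro h
      have := congrArg Complex.re h
      simp at this
    have hdiv : (↑Real.pi / -bC u) = ((2:ℂ) - u * Complex.I)⁻¹ := by
      unfold bC
      have hw' : ((u:ℂ) * Complex.I - 2) ≠ 0 :=
        fun h => hw (by rw [← neg_eq_zero, neg_sub] at h; exact h)
      have hpi : (Real.pi : ℂ) ≠ 0 := Complex.ofReal_ne_zero.mpr Real.pi_ne_zero
      field_simp
      ring
    rw [hdiv, show ((1:ℂ)/2) = ((1/2 : ℝ) : ℂ) by norm_num,
      Complex.norm_cpow_real, norm_inv]
    have habs : ‖((2:ℂ) - u * Complex.I)‖ = Real.sqrt (4 + u ^ 2) := by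
      rw [Complex.norm_def, Complex.normSq_apply]
      congr 1
      simp [Complex.sub_re, Complex.sub_im, Complex.mul_re, Complex.mul_im]
      ring
    rw [habs, Real.sqrt_eq_rpow, ← Real.rpow_neg hs0, ← Real.rpow_mul hs0]
    norm_num
  have h2 : ‖Complex.exp (dC x - cC x ξ ^ 2 / (4 * bC u))‖ = Real.exp (Efun u x ξ) := by
    rw [keyc, Complex.norm_exp]
    congr 1
    simp
  rw [h1, h2]

lemma gauss2d {a b : ℝ} (ha : 0 < a) (hb : 0 < b) (k : ℝ) :
    ∫ z : ℝ × ℝ, Real.exp (-a * z.1 ^ 2) * Real.exp (-b * (z.2 - k * z.1) ^ 2)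
      = Real.sqrt (Real.pi / a) * Real.sqrt (Real.pi / b) := by
  have hmeas : AEStronglyMeasurable
      (fun z : ℝ × ℝ => Real.exp (-a * z.1 ^ 2) * Real.exp (-b * (z.2 - k * z.1) ^ 2)) volume := by
    apply Continuous.aestronglyMeasurable
    fun_prop
  rw [MeasureTheory.Measure.volume_eq_prod ℝ ℝ] at hmeas ⊢
  have hint : Integrable
      (fun z : ℝ × ℝ => Real.exp (-a * z.1 ^ 2) * Real.exp (-b * (z.2 - k * z.1) ^ 2))
      ((volume : Measure ℝ).prod volume) := by
    rw [MeasureTheory.integrable_prod_iff hmeas]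
    constructor
    · refine Filter.Eventually.of_forall (fun x => ?_)
      show Integrable (fun y : ℝ => Real.exp (-a * x ^ 2) * Real.exp (-b * (y - k * x) ^ 2)) volume
      exact ((integrable_exp_neg_mul_sq hb).comp_sub_right (k * x)).const_mul _
    · have hpt : (fun x : ℝ => ∫ y : ℝ, ‖Real.exp (-a * x ^ 2) * Real.exp (-b * (y - k * x) ^ 2)‖)
          = fun x : ℝ => Real.exp (-a * x ^ 2) * Real.sqrt (Real.pi / b) := by
        funext x
        have : ∀ y : ℝ, ‖Real.exp (-a * x ^ 2) * Real.exp (-b * (y - k * x) ^ 2)‖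
            = Real.exp (-a * x ^ 2) * Real.exp (-b * (y - k * x) ^ 2) := by
          intro y; rw [Real.norm_eq_abs, _root_.abs_of_nonneg (by positivity)]
        simp_rw [this]
        rw [integral_const_mul,
          integral_sub_right_eq_self (fun y => Real.exp (-b * y ^ 2)) (k * x),
          integral_gaussian]
      rw [hpt]
      exact (integrable_exp_neg_mul_sq ha).mul_const _
  rw [MeasureTheory.integral_prod _ hint]
  calc ∫ x : ℝ, ∫ y : ℝ, Real.exp (-a * x ^ 2) * Real.exp (-b * (y - k * x) ^ 2)
      = ∫ x : ℝ, Real.exp (-a * x ^ 2) * Real.sqrt (Real.pi / b) := by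
        congr 1
        funext x
        rw [integral_const_mul,
          integral_sub_right_eq_self (fun y => Real.exp (-b * y ^ 2)) (k * x),
          integral_gaussian]
    _ = Real.sqrt (Real.pi / a) * Real.sqrt (Real.pi / b) := by
        rw [MeasureTheory.integral_mul_const, integral_gaussian]

lemma intB (u : ℝ) {p : ℝ} (hp : 0 < p) :
    ∫ z : ℝ × ℝ, ((4 + u ^ 2) ^ (-(1/4) : ℝ) * Real.exp (Efun u z.1 z.2)) ^ p
      = (4 + u ^ 2) ^ ((1:ℝ)/2 - p/4) / p := by
  have hs : (0:ℝ) < 4 + u ^ 2 := by positivity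
  have hs0 : (0:ℝ) ≤ 4 + u ^ 2 := hs.le
  have hpt : ∀ z : ℝ × ℝ, ((4 + u ^ 2) ^ (-(1/4) : ℝ) * Real.exp (Efun u z.1 z.2)) ^ p
      = (4 + u ^ 2) ^ (-(1/4) * p) *
        (Real.exp (-(p * Real.pi / 2) * z.1 ^ 2) *
         Real.exp (-(2 * p * Real.pi / (4 + u ^ 2)) * (z.2 - u / 2 * z.1) ^ 2)) := by
    intro z
    rw [Real.mul_rpow (by positivity) (Real.exp_nonneg _), ← Real.exp_mul,
      ← Real.rpow_mul hs0, ← Real.exp_add]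
    congr 1
    unfold Efun
    field_simp
    ring
  simp_rw [hpt]
  rw [integral_const_mul, gauss2d (by positivity) (by positivity) (u/2),
    ← Real.sqrt_mul (by positivity)]
  rw [show Real.pi / (p * Real.pi / 2) * (Real.pi / (2 * p * Real.pi / (4 + u ^ 2)))
      = (4 + u ^ 2) / p ^ 2 by
    field_simp]
  rw [Real.sqrt_div hs0, Real.sqrt_sq hp.le, Real.sqrt_eq_rpow, ← mul_div_assoc,
    ← Real.rpow_add hs]
  congr 1
  ring

lemma transl (f : ℝ × ℝ → ℝ) (u : ℝ) :
    ∫ z : ℝ × ℝ, f (z.1, z.2 - u) = ∫ z : ℝ × ℝ, f z := by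
  have hmp : MeasurePreserving (fun z : ℝ × ℝ => (z.1, z.2 - u)) volume volume :=
    (MeasurePreserving.id volume).prod (measurePreserving_sub_right volume u)
  have hemb : MeasurableEmbedding (fun z : ℝ × ℝ => (z.1, z.2 - u)) :=
    ((MeasurableEquiv.refl ℝ).prodCongr (MeasurableEquiv.subRight u)).measurableEmbedding
  exact hmp.integral_comp hemb f

noncomputable def pppc : ((ℝ × ℝ) × ℝ × ℝ) ≃ᵐ ((ℝ × ℝ) × ℝ × ℝ) where
  toEquiv := Equiv.prodProdProdComm ℝ ℝ ℝ ℝ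
  measurable_toFun := by
    show Measurable fun w : (ℝ × ℝ) × ℝ × ℝ => ((w.1.1, w.2.1), (w.1.2, w.2.2))
    fun_prop
  measurable_invFun := by
    show Measurable fun w : (ℝ × ℝ) × ℝ × ℝ => ((w.1.1, w.2.1), (w.1.2, w.2.2))
    fun_prop

lemma pppc_mp : MeasurePreserving (⇑pppc) volume volume := by
  have e1 : MeasurePreserving
      (⇑(MeasurableEquiv.prodAssoc : ((ℝ × ℝ) × (ℝ × ℝ)) ≃ᵐ ℝ × ℝ × ℝ × ℝ)) volume volume :=
    MeasureTheory.volume_preserving_prodAssoc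
  have e2 : MeasurePreserving
      (Prod.map (id : ℝ → ℝ)
        (⇑(MeasurableEquiv.prodAssoc.symm : (ℝ × ℝ × ℝ) ≃ᵐ (ℝ × ℝ) × ℝ))) volume volume :=
    (MeasurePreserving.id volume).prod
      (MeasureTheory.volume_preserving_prodAssoc.symm MeasurableEquiv.prodAssoc)
  have e3 : MeasurePreserving
      (Prod.map (id : ℝ → ℝ) (Prod.map (Prod.swap : ℝ × ℝ → ℝ × ℝ) (id : ℝ → ℝ)))
      volume volume :=
    (MeasurePreserving.id volume).prod
      ((MeasureTheory.Measure.measurePreserving_swap).prod (MeasurePreserving.id volume))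
  have e4 : MeasurePreserving
      (Prod.map (id : ℝ → ℝ)
        (⇑(MeasurableEquiv.prodAssoc : ((ℝ × ℝ) × ℝ) ≃ᵐ ℝ × ℝ × ℝ))) volume volume :=
    (MeasurePreserving.id volume).prod MeasureTheory.volume_preserving_prodAssoc
  have e5 : MeasurePreserving
      (⇑((MeasurableEquiv.prodAssoc : ((ℝ × ℝ) × (ℝ × ℝ)) ≃ᵐ ℝ × ℝ × ℝ × ℝ).symm))
      volume volume :=
    MeasureTheory.volume_preserving_prodAssoc.symm _
  exact ((((e5.comp e4).comp e3).comp e2).comp e1 : _)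

lemma rearrange (F G : ℝ → ℝ → ℝ) :
    ∫ w : (ℝ × ℝ) × ℝ × ℝ, F w.1.1 w.2.1 * G w.1.2 w.2.2
      = (∫ z : ℝ × ℝ, F z.1 z.2) * ∫ z : ℝ × ℝ, G z.1 z.2 := by
  have h := pppc_mp.integral_comp pppc.measurableEmbedding
    (fun z : (ℝ × ℝ) × ℝ × ℝ => F z.1.1 z.1.2 * G z.2.1 z.2.2)
  calc ∫ w : (ℝ × ℝ) × ℝ × ℝ, F w.1.1 w.2.1 * G w.1.2 w.2.2
      = ∫ w : (ℝ × ℝ) × ℝ × ℝ,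
          (fun z : (ℝ × ℝ) × ℝ × ℝ => F z.1.1 z.1.2 * G z.2.1 z.2.2) (pppc w) := rfl
    _ = ∫ z : (ℝ × ℝ) × ℝ × ℝ, F z.1.1 z.1.2 * G z.2.1 z.2.2 := h
    _ = (∫ z : ℝ × ℝ, F z.1 z.2) * ∫ z : ℝ × ℝ, G z.1 z.2 := by
        rw [MeasureTheory.Measure.volume_eq_prod]
        exact MeasureTheory.integral_prod_mul (fun z : ℝ × ℝ => F z.1 z.2)
          (fun z : ℝ × ℝ => G z.1 z.2)

/-- For `1 ≤ p < 2` the orbit `{π(0,0,0,u,0)(f₁⊗φ) : u ∈ ℝ}` is unbounded in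
`M^p(ℝ²)`: `‖π(0,0,0,u,0)(f₁⊗φ)‖_{M^p} = c_p (4+u²)^{1/(2p)-1/4} ‖f₁‖_{M^p}`,
which tends to infinity as `|u| → ∞`. -/
theorem g53_orbit_unbounded_in_Mp (p : ℝ) (hp : 1 ≤ p) (hp2 : p < 2) :
    ∃ c > 0, ∀ f₁ : ℝ → ℂ,
      Integrable (fun z : ℝ × ℝ => ‖stftGauss f₁ z.1 z.2‖ ^ p) →
      (∀ u : ℝ,
        (∫ w : (ℝ × ℝ) × ℝ × ℝ,
            ‖stftGauss2 (g53rep (0, 0, 0, u, 0) (fun q => f₁ q.1 * gauss1 q.2))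
              w.1.1 w.1.2 w.2.1 w.2.2‖ ^ p) ^ (1 / p)
          = c * (4 + u ^ 2) ^ (1 / (2 * p) - 1 / 4) *
            (∫ z : ℝ × ℝ, ‖stftGauss f₁ z.1 z.2‖ ^ p) ^ (1 / p)) ∧
      (0 < (∫ z : ℝ × ℝ, ‖stftGauss f₁ z.1 z.2‖ ^ p) ^ (1 / p) →
        Tendsto (fun u : ℝ =>
          (∫ w : (ℝ × ℝ) × ℝ × ℝ,
            ‖stftGauss2 (g53rep (0, 0, 0, u, 0) (fun q => f₁ q.1 * gauss1 q.2))
              w.1.1 w.1.2 w.2.1 w.2.2‖ ^ p) ^ (1 / p)) (cocompact ℝ) atTop) := by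
  have hp0 : (0:ℝ) < p := lt_of_lt_of_le one_pos hp
  refine ⟨(p⁻¹) ^ (1/p), Real.rpow_pos_of_pos (by positivity) _, ?_⟩
  intro f₁ _
  set J := ∫ z : ℝ × ℝ, ‖stftGauss f₁ z.1 z.2‖ ^ p with hJdef
  have hJ0 : 0 ≤ J := integral_nonneg (fun z => Real.rpow_nonneg (norm_nonneg _) p)
  have main : ∀ u : ℝ,
      (∫ w : (ℝ × ℝ) × ℝ × ℝ,
        ‖stftGauss2 (g53rep (0, 0, 0, u, 0) (fun q => f₁ q.1 * gauss1 q.2))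
          w.1.1 w.1.2 w.2.1 w.2.2‖ ^ p)
      = J * ((4 + u ^ 2) ^ ((1:ℝ)/2 - p/4) / p) := by
    intro u
    have hpt : ∀ w : (ℝ × ℝ) × ℝ × ℝ,
        ‖stftGauss2 (g53rep (0, 0, 0, u, 0) (fun q => f₁ q.1 * gauss1 q.2))
          w.1.1 w.1.2 w.2.1 w.2.2‖ ^ p
        = (fun a b : ℝ => ‖stftGauss f₁ a (b - u)‖ ^ p) w.1.1 w.2.1 *
          (fun a b : ℝ => ((4 + u ^ 2) ^ (-(1/4) : ℝ) * Real.exp (Efun u a b)) ^ p)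
            w.1.2 w.2.2 := by
      intro w
      rw [fact1, norm_mul, normB, Real.mul_rpow (norm_nonneg _) (by positivity)]
    calc (∫ w : (ℝ × ℝ) × ℝ × ℝ,
          ‖stftGauss2 (g53rep (0, 0, 0, u, 0) (fun q => f₁ q.1 * gauss1 q.2))
            w.1.1 w.1.2 w.2.1 w.2.2‖ ^ p)
        = ∫ w : (ℝ × ℝ) × ℝ × ℝ,
            (fun a b : ℝ => ‖stftGauss f₁ a (b - u)‖ ^ p) w.1.1 w.2.1 *
            (fun a b : ℝ => ((4 + u ^ 2) ^ (-(1/4) : ℝ) * Real.exp (Efun u a b)) ^ p)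
              w.1.2 w.2.2 :=
          integral_congr_ae (Filter.Eventually.of_forall hpt)
      _ = (∫ z : ℝ × ℝ, (fun a b : ℝ => ‖stftGauss f₁ a (b - u)‖ ^ p) z.1 z.2) *
          ∫ z : ℝ × ℝ, (fun a b : ℝ => ((4 + u ^ 2) ^ (-(1/4) : ℝ) * Real.exp (Efun u a b)) ^ p)
            z.1 z.2 :=
          rearrange (fun a b : ℝ => ‖stftGauss f₁ a (b - u)‖ ^ p)
            (fun a b : ℝ => ((4 + u ^ 2) ^ (-(1/4) : ℝ) * Real.exp (Efun u a b)) ^ p)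
      _ = (∫ z : ℝ × ℝ, ‖stftGauss f₁ z.1 (z.2 - u)‖ ^ p) *
          ∫ z : ℝ × ℝ, ((4 + u ^ 2) ^ (-(1/4) : ℝ) * Real.exp (Efun u z.1 z.2)) ^ p := rfl
      _ = J * ((4 + u ^ 2) ^ ((1:ℝ)/2 - p/4) / p) := by
          rw [intB u hp0]
          congr 1
          exact transl (fun z => ‖stftGauss f₁ z.1 z.2‖ ^ p) u
  have key : ∀ u : ℝ,
      (∫ w : (ℝ × ℝ) × ℝ × ℝ,
        ‖stftGauss2 (g53rep (0, 0, 0, u, 0) (fun q => f₁ q.1 * gauss1 q.2))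
          w.1.1 w.1.2 w.2.1 w.2.2‖ ^ p) ^ (1 / p)
      = (p⁻¹) ^ (1/p) * (4 + u ^ 2) ^ (1 / (2 * p) - 1 / 4) * J ^ (1 / p) := by
    intro u
    have hs : (0:ℝ) < 4 + u ^ 2 := by positivity
    rw [main u, div_eq_mul_inv, Real.mul_rpow hJ0 (by positivity),
      Real.mul_rpow (Real.rpow_nonneg hs.le _) (by positivity),
      ← Real.rpow_mul hs.le,
      show ((1:ℝ)/2 - p/4) * (1/p) = 1 / (2 * p) - 1 / 4 by
        have hpne : p ≠ 0 := hp0.ne'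
        field_simp]
    ring
  refine ⟨key, ?_⟩
  intro hK
  have hfun : (fun u : ℝ =>
      (∫ w : (ℝ × ℝ) × ℝ × ℝ,
        ‖stftGauss2 (g53rep (0, 0, 0, u, 0) (fun q => f₁ q.1 * gauss1 q.2))
          w.1.1 w.1.2 w.2.1 w.2.2‖ ^ p) ^ (1 / p))
      = fun u : ℝ => (p⁻¹) ^ (1/p) * (4 + u ^ 2) ^ (1 / (2 * p) - 1 / 4) * J ^ (1 / p) :=
    funext key
  rw [hfun]
  have he : (0:ℝ) < 1 / (2 * p) - 1 / 4 := by
    rw [sub_pos, div_lt_div_iff₀ (by norm_num) (by positivity)]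
    nlinarith
  have h1 : Tendsto (fun u : ℝ => 4 + u ^ 2) (cocompact ℝ) atTop := by
    have hsq : Tendsto (fun u : ℝ => u ^ 2) (cocompact ℝ) atTop := by
      have h := (tendsto_pow_atTop (n := 2) (two_ne_zero)).comp
        (tendsto_norm_cocompact_atTop (E := ℝ))
      exact h.congr fun u => by simp [Function.comp, Real.norm_eq_abs, sq_abs]
    exact tendsto_atTop_add_const_left _ 4 hsq
  have h2 : Tendsto (fun u : ℝ => (4 + u ^ 2) ^ (1 / (2 * p) - 1 / 4)) (cocompact ℝ) atTop := by
    have := (tendsto_rpow_atTop he).comp h1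
    simpa [Function.comp_def] using this
  have h3 : Tendsto (fun u : ℝ => (p⁻¹) ^ (1/p) * (4 + u ^ 2) ^ (1 / (2 * p) - 1 / 4))
      (cocompact ℝ) atTop :=
    (h2.const_mul_atTop (Real.rpow_pos_of_pos (by positivity) _))
  exact h3.atTop_mul_const hK
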